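/- arXiv:1504.01136 — 4 statements merged into one kernel-verified Lean document; each statement's English description precedes it below -/
import Mathlib

section
/- Let d¹, d², d³ be 3×3 real matrices and for ξ ∈ ℝ³ set d(ξ) = ξ₁d¹ + ξ₂d² + ξ₃d³. If for every rotation O = (o₁,o₂,o₃)ᵀ ∈ SO(3) (rows oᵢ) one has dⁱ = O·d(oᵢ)·Oᵀ for i = 1,2,3, then there is a scalar δ such that d¹ = δ·(E₂₃ − E₃₂), d² = δ·(E₃₁ − E₁₃), d³ = δ·(E₁₂ − E₂₁), where Eᵢⱼ denotes the matrix with 1 in entry (i,j) and 0 elsewhere. -/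
open Matrix

set_option maxHeartbeats 2000000 in
theorem stmt_2 (d : Fin 3 → Matrix (Fin 3) (Fin 3) ℝ)
    (h : ∀ O : Matrix (Fin 3) (Fin 3) ℝ, O * Oᵀ = 1 → O.det = 1 →
      ∀ i : Fin 3, d i = O * (∑ j : Fin 3, O i j • d j) * Oᵀ) :
    ∃ δ : ℝ,
      d 0 = δ • (Matrix.single 1 2 (1 : ℝ) - Matrix.single 2 1 1) ∧
      d 1 = δ • (Matrix.single 2 0 (1 : ℝ) - Matrix.single 0 2 1) ∧
      d 2 = δ • (Matrix.single 0 1 (1 : ℝ) - Matrix.single 1 0 1) := by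
  have tD1 : (!![1,0,0;0,-1,0;0,0,-1] : Matrix (Fin 3) (Fin 3) ℝ)ᵀ = !![1,0,0;0,-1,0;0,0,-1] := by
    ext r c; fin_cases r <;> fin_cases c <;> rfl
  have tD2 : (!![-1,0,0;0,1,0;0,0,-1] : Matrix (Fin 3) (Fin 3) ℝ)ᵀ = !![-1,0,0;0,1,0;0,0,-1] := by
    ext r c; fin_cases r <;> fin_cases c <;> rfl
  have tP : (!![0,1,0;0,0,1;1,0,0] : Matrix (Fin 3) (Fin 3) ℝ)ᵀ = !![0,0,1;1,0,0;0,1,0] := by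
    ext r c; fin_cases r <;> fin_cases c <;> rfl
  have tRz : (!![0,-1,0;1,0,0;0,0,1] : Matrix (Fin 3) (Fin 3) ℝ)ᵀ = !![0,1,0;-1,0,0;0,0,1] := by
    ext r c; fin_cases r <;> fin_cases c <;> rfl
  have hD1 := h !![1,0,0;0,-1,0;0,0,-1]
    (by rw [tD1]; ext r c; fin_cases r <;> fin_cases c <;>
      simp [Matrix.mul_apply, Fin.sum_univ_three, Matrix.vecHead, Matrix.vecTail, Matrix.one_apply])
    (by simp [Matrix.det_fin_three])
  have hD2 := h !![-1,0,0;0,1,0;0,0,-1]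
    (by rw [tD2]; ext r c; fin_cases r <;> fin_cases c <;>
      simp [Matrix.mul_apply, Fin.sum_univ_three, Matrix.vecHead, Matrix.vecTail, Matrix.one_apply])
    (by simp [Matrix.det_fin_three])
  have hP := h !![0,1,0;0,0,1;1,0,0]
    (by rw [tP]; ext r c; fin_cases r <;> fin_cases c <;>
      simp [Matrix.mul_apply, Fin.sum_univ_three, Matrix.vecHead, Matrix.vecTail, Matrix.one_apply])
    (by simp [Matrix.det_fin_three])
  have hRz := h !![0,-1,0;1,0,0;0,0,1]
    (by rw [tRz]; ext r c; fin_cases r <;> fin_cases c <;>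
      simp [Matrix.mul_apply, Fin.sum_univ_three, Matrix.vecHead, Matrix.vecTail, Matrix.one_apply])
    (by simp [Matrix.det_fin_three])
  rw [tD1] at hD1
  rw [tD2] at hD2
  rw [tP] at hP
  rw [tRz] at hRz
  have E1 := congrFun (congrFun (hD1 0) 0) 1
  have E2 := congrFun (congrFun (hD1 0) 0) 2
  have E3 := congrFun (congrFun (hD1 0) 1) 0
  have E4 := congrFun (congrFun (hD1 0) 2) 0
  have E5 := congrFun (congrFun (hD2 0) 0) 0
  have E6 := congrFun (congrFun (hD2 0) 0) 2
  have E7 := congrFun (congrFun (hD2 0) 1) 1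
  have E8 := congrFun (congrFun (hD2 0) 2) 0
  have E9 := congrFun (congrFun (hD2 0) 2) 2
  have E10 := congrFun (congrFun (hP 1) 0) 0
  have E11 := congrFun (congrFun (hP 1) 0) 1
  have E12 := congrFun (congrFun (hP 1) 0) 2
  have E13 := congrFun (congrFun (hP 1) 1) 0
  have E14 := congrFun (congrFun (hP 1) 1) 1
  have E15 := congrFun (congrFun (hP 1) 1) 2
  have E16 := congrFun (congrFun (hP 1) 2) 0
  have E17 := congrFun (congrFun (hP 1) 2) 1
  have E18 := congrFun (congrFun (hP 1) 2) 2
  have E19 := congrFun (congrFun (hP 2) 0) 0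
  have E20 := congrFun (congrFun (hP 2) 0) 1
  have E21 := congrFun (congrFun (hP 2) 0) 2
  have E22 := congrFun (congrFun (hP 2) 1) 0
  have E23 := congrFun (congrFun (hP 2) 1) 1
  have E24 := congrFun (congrFun (hP 2) 1) 2
  have E25 := congrFun (congrFun (hP 2) 2) 0
  have E26 := congrFun (congrFun (hP 2) 2) 1
  have E27 := congrFun (congrFun (hP 2) 2) 2
  have E28 := congrFun (congrFun (hRz 1) 0) 0
  have E29 := congrFun (congrFun (hRz 1) 0) 1
  have E30 := congrFun (congrFun (hRz 1) 0) 2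
  have E31 := congrFun (congrFun (hRz 1) 1) 0
  have E32 := congrFun (congrFun (hRz 1) 1) 1
  have E33 := congrFun (congrFun (hRz 1) 1) 2
  have E34 := congrFun (congrFun (hRz 1) 2) 0
  have E35 := congrFun (congrFun (hRz 1) 2) 1
  have E36 := congrFun (congrFun (hRz 1) 2) 2
  simp only [Matrix.mul_apply, Matrix.sum_apply, Matrix.smul_apply, Fin.sum_univ_three,
    Matrix.cons_val', Matrix.cons_val_zero, Matrix.cons_val_one, Matrix.head_cons,
    Matrix.empty_val', Matrix.cons_val_fin_one, Matrix.head_fin_const, Matrix.cons_val_two,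
    Matrix.tail_cons, Matrix.of_apply, Matrix.add_apply, Matrix.neg_apply, Matrix.zero_apply, one_smul, zero_smul, neg_smul, smul_eq_mul, one_mul, zero_mul, mul_zero, mul_one,
    neg_mul, mul_neg, neg_neg, add_zero, zero_add, neg_zero] at E1 E2 E3 E4 E5 E6 E7 E8 E9 E10 E11 E12 E13 E14 E15 E16 E17 E18 E19 E20 E21 E22 E23 E24 E25 E26 E27 E28 E29 E30 E31 E32 E33 E34 E35 E36
  refine ⟨d 0 1 2, ?_, ?_, ?_⟩ <;> ext r c <;> fin_cases r <;> fin_cases c <;>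
    simp [Matrix.single, Matrix.smul_apply, Matrix.sub_apply, Matrix.of_apply] <;>
    linarith [E1, E2, E3, E4, E5, E6, E7, E8, E9, E10, E11, E12, E13, E14, E15, E16, E17, E18, E19, E20, E21, E22, E23, E24, E25, E26, E27, E28, E29, E30, E31, E32, E33, E34, E35, E36]
end

section
/- If a trilinear array (Ω^{βγ})_{β,γ=1,2,3} of reals satisfies Ω = O·Ω·Oᵀ (as a 3×3 matrix) for every O ∈ SO(3), and additionally a three-index array Ω^{αβγ} satisfies Ω^{α··} = O·(Σ_β Ω^{β··} o_{αβ})·Oᵀ for every O ∈ SO(3), then Ω^{αβγ} = δ·ε_{αβγ} for some scalar δ, where ε is the Levi-Civita symbol. -/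
open Matrix

/-- The Levi-Civita symbol on `Fin 3`, defined via a determinant. -/
noncomputable def leviCivita (α β γ : Fin 3) : ℝ :=
  Matrix.det ![Pi.single α (1 : ℝ), Pi.single β 1, Pi.single γ 1]

set_option maxHeartbeats 2000000 in
theorem stmt_3 (Ω₂ : Matrix (Fin 3) (Fin 3) ℝ) (Ω : Fin 3 → Matrix (Fin 3) (Fin 3) ℝ)
    (h₂ : ∀ O : Matrix (Fin 3) (Fin 3) ℝ, O * Oᵀ = 1 → O.det = 1 → Ω₂ = O * Ω₂ * Oᵀ)
    (h : ∀ O : Matrix (Fin 3) (Fin 3) ℝ, O * Oᵀ = 1 → O.det = 1 →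
      ∀ α : Fin 3, Ω α = O * (∑ β : Fin 3, O α β • Ω β) * Oᵀ) :
    ∃ δ : ℝ, ∀ α β γ : Fin 3, Ω α β γ = δ * leviCivita α β γ := by
  -- entrywise equations derived from specific rotations
  have derive : ∀ O : Matrix (Fin 3) (Fin 3) ℝ, O * Oᵀ = 1 → O.det = 1 →
      ∀ a b c : Fin 3, Ω a b c = (O * (∑ β : Fin 3, O a β • Ω β) * Oᵀ) b c := by
    intro O h1 h2 a b c
    exact congrFun (congrFun (h O h1 h2 a) b) c
  -- the 3-cycle rotation
  have eC : ∀ a b c : Fin 3, Ω a b c = Ω (![2,0,1] a) (![2,0,1] b) (![2,0,1] c) := by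
    have hc1 : (!![0,0,1;1,0,0;0,1,0] : Matrix (Fin 3) (Fin 3) ℝ) * (!![0,0,1;1,0,0;0,1,0] : Matrix (Fin 3) (Fin 3) ℝ)ᵀ = 1 := by
      ext i j; fin_cases i <;> fin_cases j <;>
        simp [Matrix.mul_apply, Matrix.transpose_apply, Fin.sum_univ_succ, Matrix.one_apply,
          Matrix.vecHead, Matrix.vecTail]
    have hc2 : (!![0,0,1;1,0,0;0,1,0] : Matrix (Fin 3) (Fin 3) ℝ).det = 1 := by
      simp [Matrix.det_fin_three]
    intro a b c
    have H := derive _ hc1 hc2 a b c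
    fin_cases a <;> fin_cases b <;> fin_cases c <;>
        simp [Matrix.mul_apply, Matrix.transpose_apply, Fin.sum_univ_succ,
          Matrix.sum_apply, Matrix.smul_apply, Matrix.vecHead, Matrix.vecTail,
          Matrix.vecMul, dotProduct] at H ⊢ <;>
        linarith
  -- the transposition-with-sign rotation
  have eS : ∀ a b c : Fin 3, Ω a b c =
      (![1,1,-1] a * (![1,1,-1] b * ![1,1,-1] c)) * Ω (![1,0,2] a) (![1,0,2] b) (![1,0,2] c) := by
    have hc1 : (!![0,1,0;1,0,0;0,0,-1] : Matrix (Fin 3) (Fin 3) ℝ) * (!![0,1,0;1,0,0;0,0,-1] : Matrix (Fin 3) (Fin 3) ℝ)ᵀ = 1 := by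
      ext i j; fin_cases i <;> fin_cases j <;>
        simp [Matrix.mul_apply, Matrix.transpose_apply, Fin.sum_univ_succ, Matrix.one_apply,
          Matrix.vecHead, Matrix.vecTail]
    have hc2 : (!![0,1,0;1,0,0;0,0,-1] : Matrix (Fin 3) (Fin 3) ℝ).det = 1 := by
      simp [Matrix.det_fin_three]
    intro a b c
    have H := derive _ hc1 hc2 a b c
    fin_cases a <;> fin_cases b <;> fin_cases c <;>
        simp [Matrix.mul_apply, Matrix.transpose_apply, Fin.sum_univ_succ,
          Matrix.sum_apply, Matrix.smul_apply, Matrix.vecHead, Matrix.vecTail,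
          Matrix.vecMul, dotProduct] at H ⊢ <;>
        linarith
  -- diagonal rotations
  have eD1 : ∀ a b c : Fin 3, Ω a b c =
      (![1,-1,-1] a * (![1,-1,-1] b * ![1,-1,-1] c)) * Ω a b c := by
    have hc1 : (!![1,0,0;0,-1,0;0,0,-1] : Matrix (Fin 3) (Fin 3) ℝ) * (!![1,0,0;0,-1,0;0,0,-1] : Matrix (Fin 3) (Fin 3) ℝ)ᵀ = 1 := by
      ext i j; fin_cases i <;> fin_cases j <;>
        simp [Matrix.mul_apply, Matrix.transpose_apply, Fin.sum_univ_succ, Matrix.one_apply,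
          Matrix.vecHead, Matrix.vecTail]
    have hc2 : (!![1,0,0;0,-1,0;0,0,-1] : Matrix (Fin 3) (Fin 3) ℝ).det = 1 := by
      simp [Matrix.det_fin_three]
    intro a b c
    have H := derive _ hc1 hc2 a b c
    fin_cases a <;> fin_cases b <;> fin_cases c <;>
        simp [Matrix.mul_apply, Matrix.transpose_apply, Fin.sum_univ_succ,
          Matrix.sum_apply, Matrix.smul_apply, Matrix.vecHead, Matrix.vecTail,
          Matrix.vecMul, dotProduct] at H ⊢ <;>
        linarith
  have eD2 : ∀ a b c : Fin 3, Ω a b c =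
      (![-1,1,-1] a * (![-1,1,-1] b * ![-1,1,-1] c)) * Ω a b c := by
    have hc1 : (!![-1,0,0;0,1,0;0,0,-1] : Matrix (Fin 3) (Fin 3) ℝ) * (!![-1,0,0;0,1,0;0,0,-1] : Matrix (Fin 3) (Fin 3) ℝ)ᵀ = 1 := by
      ext i j; fin_cases i <;> fin_cases j <;>
        simp [Matrix.mul_apply, Matrix.transpose_apply, Fin.sum_univ_succ, Matrix.one_apply,
          Matrix.vecHead, Matrix.vecTail]
    have hc2 : (!![-1,0,0;0,1,0;0,0,-1] : Matrix (Fin 3) (Fin 3) ℝ).det = 1 := by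
      simp [Matrix.det_fin_three]
    intro a b c
    have H := derive _ hc1 hc2 a b c
    fin_cases a <;> fin_cases b <;> fin_cases c <;>
        simp [Matrix.mul_apply, Matrix.transpose_apply, Fin.sum_univ_succ,
          Matrix.sum_apply, Matrix.smul_apply, Matrix.vecHead, Matrix.vecTail,
          Matrix.vecMul, dotProduct] at H ⊢ <;>
        linarith
  refine ⟨Ω 0 1 2, ?_⟩
  have K000 : Ω 0 0 0 = Ω 0 1 2 * leviCivita 0 0 0 := by
    have hlc : leviCivita 0 0 0 = (0 : ℝ) := by
      simp [leviCivita, Matrix.det_fin_three (A := ![Pi.single _ _, _, _]), Matrix.vecHead, Matrix.vecTail, Pi.single_apply]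
    have h1 : Ω 0 0 0 = -Ω 0 0 0 := by simpa using eD2 0 0 0
    rw [hlc]; linarith
  have K001 : Ω 0 0 1 = Ω 0 1 2 * leviCivita 0 0 1 := by
    have hlc : leviCivita 0 0 1 = (0 : ℝ) := by
      simp [leviCivita, Matrix.det_fin_three (A := ![Pi.single _ _, _, _]), Matrix.vecHead, Matrix.vecTail, Pi.single_apply]
    have h1 : Ω 0 0 1 = -Ω 0 0 1 := by simpa using eD1 0 0 1
    rw [hlc]; linarith
  have K002 : Ω 0 0 2 = Ω 0 1 2 * leviCivita 0 0 2 := by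
    have hlc : leviCivita 0 0 2 = (0 : ℝ) := by
      simp [leviCivita, Matrix.det_fin_three (A := ![Pi.single _ _, _, _]), Matrix.vecHead, Matrix.vecTail, Pi.single_apply]
    have h1 : Ω 0 0 2 = -Ω 0 0 2 := by simpa using eD1 0 0 2
    rw [hlc]; linarith
  have K010 : Ω 0 1 0 = Ω 0 1 2 * leviCivita 0 1 0 := by
    have hlc : leviCivita 0 1 0 = (0 : ℝ) := by
      simp [leviCivita, Matrix.det_fin_three (A := ![Pi.single _ _, _, _]), Matrix.vecHead, Matrix.vecTail, Pi.single_apply]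
    have h1 : Ω 0 1 0 = -Ω 0 1 0 := by simpa using eD1 0 1 0
    rw [hlc]; linarith
  have K011 : Ω 0 1 1 = Ω 0 1 2 * leviCivita 0 1 1 := by
    have hlc : leviCivita 0 1 1 = (0 : ℝ) := by
      simp [leviCivita, Matrix.det_fin_three (A := ![Pi.single _ _, _, _]), Matrix.vecHead, Matrix.vecTail, Pi.single_apply]
    have h1 : Ω 0 1 1 = -Ω 0 1 1 := by simpa using eD2 0 1 1
    rw [hlc]; linarith
  have K012 : Ω 0 1 2 = Ω 0 1 2 * leviCivita 0 1 2 := by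
    have hlc : leviCivita 0 1 2 = (1 : ℝ) := by
      simp [leviCivita, Matrix.det_fin_three (A := ![Pi.single _ _, _, _]), Matrix.vecHead, Matrix.vecTail, Pi.single_apply]
    rw [hlc]; linarith
  have K020 : Ω 0 2 0 = Ω 0 1 2 * leviCivita 0 2 0 := by
    have hlc : leviCivita 0 2 0 = (0 : ℝ) := by
      simp [leviCivita, Matrix.det_fin_three (A := ![Pi.single _ _, _, _]), Matrix.vecHead, Matrix.vecTail, Pi.single_apply]
    have h1 : Ω 0 2 0 = -Ω 0 2 0 := by simpa using eD1 0 2 0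
    rw [hlc]; linarith
  have K021 : Ω 0 2 1 = Ω 0 1 2 * leviCivita 0 2 1 := by
    have hlc : leviCivita 0 2 1 = (-1 : ℝ) := by
      simp [leviCivita, Matrix.det_fin_three (A := ![Pi.single _ _, _, _]), Matrix.vecHead, Matrix.vecTail, Pi.single_apply]
    have h1 : Ω 0 2 1 = -Ω 1 2 0 := by simpa using eS 0 2 1
    have h2 : Ω 1 2 0 = Ω 0 1 2 := by simpa using eC 1 2 0
    rw [hlc]; linarith
  have K022 : Ω 0 2 2 = Ω 0 1 2 * leviCivita 0 2 2 := by
    have hlc : leviCivita 0 2 2 = (0 : ℝ) := by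
      simp [leviCivita, Matrix.det_fin_three (A := ![Pi.single _ _, _, _]), Matrix.vecHead, Matrix.vecTail, Pi.single_apply]
    have h1 : Ω 0 2 2 = -Ω 0 2 2 := by simpa using eD2 0 2 2
    rw [hlc]; linarith
  have K100 : Ω 1 0 0 = Ω 0 1 2 * leviCivita 1 0 0 := by
    have hlc : leviCivita 1 0 0 = (0 : ℝ) := by
      simp [leviCivita, Matrix.det_fin_three (A := ![Pi.single _ _, _, _]), Matrix.vecHead, Matrix.vecTail, Pi.single_apply]
    have h1 : Ω 1 0 0 = -Ω 1 0 0 := by simpa using eD1 1 0 0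
    rw [hlc]; linarith
  have K101 : Ω 1 0 1 = Ω 0 1 2 * leviCivita 1 0 1 := by
    have hlc : leviCivita 1 0 1 = (0 : ℝ) := by
      simp [leviCivita, Matrix.det_fin_three (A := ![Pi.single _ _, _, _]), Matrix.vecHead, Matrix.vecTail, Pi.single_apply]
    have h1 : Ω 1 0 1 = -Ω 1 0 1 := by simpa using eD2 1 0 1
    rw [hlc]; linarith
  have K102 : Ω 1 0 2 = Ω 0 1 2 * leviCivita 1 0 2 := by
    have hlc : leviCivita 1 0 2 = (-1 : ℝ) := by
      simp [leviCivita, Matrix.det_fin_three (A := ![Pi.single _ _, _, _]), Matrix.vecHead, Matrix.vecTail, Pi.single_apply]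
    have h1 : Ω 1 0 2 = -Ω 0 1 2 := by simpa using eS 1 0 2
    rw [hlc]; linarith
  have K110 : Ω 1 1 0 = Ω 0 1 2 * leviCivita 1 1 0 := by
    have hlc : leviCivita 1 1 0 = (0 : ℝ) := by
      simp [leviCivita, Matrix.det_fin_three (A := ![Pi.single _ _, _, _]), Matrix.vecHead, Matrix.vecTail, Pi.single_apply]
    have h1 : Ω 1 1 0 = -Ω 1 1 0 := by simpa using eD2 1 1 0
    rw [hlc]; linarith
  have K111 : Ω 1 1 1 = Ω 0 1 2 * leviCivita 1 1 1 := by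
    have hlc : leviCivita 1 1 1 = (0 : ℝ) := by
      simp [leviCivita, Matrix.det_fin_three (A := ![Pi.single _ _, _, _]), Matrix.vecHead, Matrix.vecTail, Pi.single_apply]
    have h1 : Ω 1 1 1 = -Ω 1 1 1 := by simpa using eD1 1 1 1
    rw [hlc]; linarith
  have K112 : Ω 1 1 2 = Ω 0 1 2 * leviCivita 1 1 2 := by
    have hlc : leviCivita 1 1 2 = (0 : ℝ) := by
      simp [leviCivita, Matrix.det_fin_three (A := ![Pi.single _ _, _, _]), Matrix.vecHead, Matrix.vecTail, Pi.single_apply]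
    have h1 : Ω 1 1 2 = -Ω 1 1 2 := by simpa using eD1 1 1 2
    rw [hlc]; linarith
  have K120 : Ω 1 2 0 = Ω 0 1 2 * leviCivita 1 2 0 := by
    have hlc : leviCivita 1 2 0 = (1 : ℝ) := by
      simp [leviCivita, Matrix.det_fin_three (A := ![Pi.single _ _, _, _]), Matrix.vecHead, Matrix.vecTail, Pi.single_apply]
    have h1 : Ω 1 2 0 = Ω 0 1 2 := by simpa using eC 1 2 0
    rw [hlc]; linarith
  have K121 : Ω 1 2 1 = Ω 0 1 2 * leviCivita 1 2 1 := by
    have hlc : leviCivita 1 2 1 = (0 : ℝ) := by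
      simp [leviCivita, Matrix.det_fin_three (A := ![Pi.single _ _, _, _]), Matrix.vecHead, Matrix.vecTail, Pi.single_apply]
    have h1 : Ω 1 2 1 = -Ω 1 2 1 := by simpa using eD1 1 2 1
    rw [hlc]; linarith
  have K122 : Ω 1 2 2 = Ω 0 1 2 * leviCivita 1 2 2 := by
    have hlc : leviCivita 1 2 2 = (0 : ℝ) := by
      simp [leviCivita, Matrix.det_fin_three (A := ![Pi.single _ _, _, _]), Matrix.vecHead, Matrix.vecTail, Pi.single_apply]
    have h1 : Ω 1 2 2 = -Ω 1 2 2 := by simpa using eD1 1 2 2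
    rw [hlc]; linarith
  have K200 : Ω 2 0 0 = Ω 0 1 2 * leviCivita 2 0 0 := by
    have hlc : leviCivita 2 0 0 = (0 : ℝ) := by
      simp [leviCivita, Matrix.det_fin_three (A := ![Pi.single _ _, _, _]), Matrix.vecHead, Matrix.vecTail, Pi.single_apply]
    have h1 : Ω 2 0 0 = -Ω 2 0 0 := by simpa using eD1 2 0 0
    rw [hlc]; linarith
  have K201 : Ω 2 0 1 = Ω 0 1 2 * leviCivita 2 0 1 := by
    have hlc : leviCivita 2 0 1 = (1 : ℝ) := by
      simp [leviCivita, Matrix.det_fin_three (A := ![Pi.single _ _, _, _]), Matrix.vecHead, Matrix.vecTail, Pi.single_apply]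
    have h1 : Ω 2 0 1 = Ω 1 2 0 := by simpa using eC 2 0 1
    have h2 : Ω 1 2 0 = Ω 0 1 2 := by simpa using eC 1 2 0
    rw [hlc]; linarith
  have K202 : Ω 2 0 2 = Ω 0 1 2 * leviCivita 2 0 2 := by
    have hlc : leviCivita 2 0 2 = (0 : ℝ) := by
      simp [leviCivita, Matrix.det_fin_three (A := ![Pi.single _ _, _, _]), Matrix.vecHead, Matrix.vecTail, Pi.single_apply]
    have h1 : Ω 2 0 2 = -Ω 2 0 2 := by simpa using eD2 2 0 2
    rw [hlc]; linarith
  have K210 : Ω 2 1 0 = Ω 0 1 2 * leviCivita 2 1 0 := by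
    have hlc : leviCivita 2 1 0 = (-1 : ℝ) := by
      simp [leviCivita, Matrix.det_fin_three (A := ![Pi.single _ _, _, _]), Matrix.vecHead, Matrix.vecTail, Pi.single_apply]
    have h1 : Ω 2 1 0 = -Ω 2 0 1 := by simpa using eS 2 1 0
    have h2 : Ω 2 0 1 = Ω 1 2 0 := by simpa using eC 2 0 1
    have h3 : Ω 1 2 0 = Ω 0 1 2 := by simpa using eC 1 2 0
    rw [hlc]; linarith
  have K211 : Ω 2 1 1 = Ω 0 1 2 * leviCivita 2 1 1 := by
    have hlc : leviCivita 2 1 1 = (0 : ℝ) := by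
      simp [leviCivita, Matrix.det_fin_three (A := ![Pi.single _ _, _, _]), Matrix.vecHead, Matrix.vecTail, Pi.single_apply]
    have h1 : Ω 2 1 1 = -Ω 2 1 1 := by simpa using eD1 2 1 1
    rw [hlc]; linarith
  have K212 : Ω 2 1 2 = Ω 0 1 2 * leviCivita 2 1 2 := by
    have hlc : leviCivita 2 1 2 = (0 : ℝ) := by
      simp [leviCivita, Matrix.det_fin_three (A := ![Pi.single _ _, _, _]), Matrix.vecHead, Matrix.vecTail, Pi.single_apply]
    have h1 : Ω 2 1 2 = -Ω 2 1 2 := by simpa using eD1 2 1 2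
    rw [hlc]; linarith
  have K220 : Ω 2 2 0 = Ω 0 1 2 * leviCivita 2 2 0 := by
    have hlc : leviCivita 2 2 0 = (0 : ℝ) := by
      simp [leviCivita, Matrix.det_fin_three (A := ![Pi.single _ _, _, _]), Matrix.vecHead, Matrix.vecTail, Pi.single_apply]
    have h1 : Ω 2 2 0 = -Ω 2 2 0 := by simpa using eD2 2 2 0
    rw [hlc]; linarith
  have K221 : Ω 2 2 1 = Ω 0 1 2 * leviCivita 2 2 1 := by
    have hlc : leviCivita 2 2 1 = (0 : ℝ) := by
      simp [leviCivita, Matrix.det_fin_three (A := ![Pi.single _ _, _, _]), Matrix.vecHead, Matrix.vecTail, Pi.single_apply]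
    have h1 : Ω 2 2 1 = -Ω 2 2 1 := by simpa using eD1 2 2 1
    rw [hlc]; linarith
  have K222 : Ω 2 2 2 = Ω 0 1 2 * leviCivita 2 2 2 := by
    have hlc : leviCivita 2 2 2 = (0 : ℝ) := by
      simp [leviCivita, Matrix.det_fin_three (A := ![Pi.single _ _, _, _]), Matrix.vecHead, Matrix.vecTail, Pi.single_apply]
    have h1 : Ω 2 2 2 = -Ω 2 2 2 := by simpa using eD1 2 2 2
    rw [hlc]; linarith
  intro a b c
  fin_cases a <;> fin_cases b <;> fin_cases c <;> assumption
end

section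
/- One-dimensional transport bilinear estimate: let λ₁ ≠ λ₂ be real constants and let φᵢ (i = 1,2) solve ∂ₜφᵢ + λᵢ∂ₓφᵢ = Fᵢ on [0,T] × ℝ with φᵢ(0,·) = φ₀ⁱ. Then ‖φ₁φ₂‖_{L¹([0,T]×ℝ)} ≤ C(λ₁,λ₂)·(‖φ₀¹‖_{L¹(ℝ)} + ‖F₁‖_{L¹([0,T]×ℝ)})·(‖φ₀²‖_{L¹(ℝ)} + ‖F₂‖_{L¹([0,T]×ℝ)}), with C depending only on |λ₁ − λ₂|⁻¹ (in particular C = 1/|λ₁−λ₂| suffices). -/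
open MeasureTheory
open scoped ENNReal

/-- Partial derivative in the first (time) variable. -/
noncomputable def pt (f : ℝ × ℝ → ℝ) : ℝ × ℝ → ℝ :=
  fun p => deriv (fun t => f (t, p.2)) p.1

/-- Partial derivative in the second (space) variable. -/
noncomputable def px (f : ℝ × ℝ → ℝ) : ℝ × ℝ → ℝ :=
  fun p => deriv (fun x => f (p.1, x)) p.2


lemma scale (g : ℝ → ℝ≥0∞) (hg : Measurable g) {c : ℝ} (hc : c ≠ 0) :
    ∫⁻ t : ℝ, g (c * t) = (ENNReal.ofReal |c|)⁻¹ * ∫⁻ u, g u := by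
  have := MeasureTheory.lintegral_map hg (measurable_const_mul c) (μ := (volume : Measure ℝ))
  rw [Real.map_volume_mul_left hc] at this
  rw [show (fun t => g (c * t)) = (fun t => g ((c * ·) t)) from rfl]
  calc ∫⁻ t, g (c * t) = ∫⁻ u, g u ∂(ENNReal.ofReal |c⁻¹| • (volume : Measure ℝ)) := this.symm
    _ = ENNReal.ofReal |c⁻¹| * ∫⁻ u, g u := by rw [lintegral_smul_measure, smul_eq_mul]
    _ = (ENNReal.ofReal |c|)⁻¹ * ∫⁻ u, g u := by
        rw [abs_inv, ENNReal.ofReal_inv_of_pos (abs_pos.2 hc)]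

lemma key (a b : ℝ) (hab : a ≠ b) (f g : ℝ → ℝ≥0∞) (hf : Measurable f) (hg : Measurable g) :
    ∫⁻ p : ℝ × ℝ, f (p.2 - a * p.1) * g (p.2 - b * p.1)
      = (ENNReal.ofReal |a - b|)⁻¹ * ((∫⁻ u, f u) * ∫⁻ u, g u) := by
  have hδ : a - b ≠ 0 := sub_ne_zero.2 hab
  have hm : Measurable fun p : ℝ × ℝ => f (p.2 - a * p.1) * g (p.2 - b * p.1) := by
    exact ((hf.comp (by fun_prop)).mul (hg.comp (by fun_prop)))
  rw [Measure.volume_eq_prod, lintegral_prod _ hm.aemeasurable]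
  have h1 : ∀ t : ℝ, ∫⁻ x, f (x - a * t) * g (x - b * t)
      = ∫⁻ u, f u * g (u + (a - b) * t) := by
    intro t
    rw [← lintegral_add_right_eq_self (fun x => f (x - a*t) * g (x - b*t)) (a*t)]
    congr 1; funext u
    rw [show u + a*t - a*t = u by ring, show u + a*t - b*t = u + (a-b)*t by ring]
  simp only [h1]
  rw [lintegral_lintegral_swap]
  · have h2 : ∀ u : ℝ, ∫⁻ t, f u * g (u + (a - b) * t)
        = f u * ((ENNReal.ofReal |a - b|)⁻¹ * ∫⁻ v, g v) := by
      intro u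
      rw [lintegral_const_mul (f u) (show Measurable fun t : ℝ => g (u + (a-b)*t) from hg.comp (by fun_prop))]
      congr 1
      have := scale (fun v => g (u + v)) (hg.comp (by fun_prop)) hδ
      rw [show (fun t : ℝ => g (u + (a-b) * t)) = fun t : ℝ => g (u + (a-b) * t) from rfl, this]
      congr 1
      calc ∫⁻ v, g (u + v) = ∫⁻ v, g (v + u) := by simp_rw [add_comm]
        _ = ∫⁻ v, g v := lintegral_add_right_eq_self _ u
    simp only [h2]
    rw [lintegral_mul_const _ hf]
    ring
  · exact ((hf.comp (by fun_prop)).mul (hg.comp (by fun_prop))).aemeasurable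

lemma char (lam : ℝ) (φ : ℝ × ℝ → ℝ) (hφ : ContDiff ℝ 1 φ) (t x : ℝ) :
    φ (t, x) = φ (0, x - lam * t)
      + ∫ s in (0:ℝ)..t, fderiv ℝ φ (s, x - lam * t + lam * s) (1, lam) := by
  set γ : ℝ → ℝ × ℝ := fun s => (s, x - lam * t + lam * s) with hγ
  have hγc : Continuous γ := by fun_prop
  have hder : ∀ s : ℝ, HasDerivAt (fun s => φ (γ s)) (fderiv ℝ φ (γ s) (1, lam)) s := by
    intro s
    have h2 : HasDerivAt (fun s : ℝ => x - lam * t + lam * s) lam s := by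
      simpa using ((hasDerivAt_id s).const_mul lam).const_add (x - lam * t)
    exact ((hφ.differentiable one_ne_zero (γ s)).hasFDerivAt).comp_hasDerivAt s
      ((hasDerivAt_id s).prodMk h2)
  have hcont : Continuous fun s => fderiv ℝ φ (γ s) (1, lam) :=
    ((hφ.continuous_fderiv one_ne_zero).comp hγc).clm_apply continuous_const
  have := intervalIntegral.integral_eq_sub_of_hasDerivAt (fun s _ => hder s)
    (hcont.intervalIntegrable 0 t)
  have hγt : γ t = (t, x) := by simp [hγ]
  have hγ0 : γ 0 = (0, x - lam * t) := by simp [hγ]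
  rw [hγt, hγ0] at this
  linarith [this]

lemma pointbound (T lam : ℝ) (φ : ℝ × ℝ → ℝ) (hφ : ContDiff ℝ 1 φ) {t : ℝ} (x : ℝ)
    (ht : t ∈ Set.Icc 0 T) :
    ENNReal.ofReal |φ (t, x)| ≤ ENNReal.ofReal |φ (0, x - lam * t)|
      + ∫⁻ s in Set.Icc 0 T, ENNReal.ofReal |fderiv ℝ φ (s, x - lam * t + lam * s) (1, lam)| := by
  obtain ⟨ht0, htT⟩ := ht
  set G : ℝ → ℝ := fun s => fderiv ℝ φ (s, x - lam * t + lam * s) (1, lam) with hG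
  have hGc : Continuous G := by
    exact ((hφ.continuous_fderiv one_ne_zero).comp (by fun_prop)).clm_apply continuous_const
  have h1 : |φ (t, x)| ≤ |φ (0, x - lam * t)| + ∫ s in Set.Ioc 0 t, |G s| := by
    rw [char lam φ hφ t x]
    refine (abs_add_le _ _).trans (add_le_add le_rfl ?_)
    calc |∫ s in (0:ℝ)..t, G s| ≤ ∫ s in (0:ℝ)..t, |G s| :=
          intervalIntegral.abs_integral_le_integral_abs ht0
      _ = ∫ s in Set.Ioc 0 t, |G s| := intervalIntegral.integral_of_le ht0
  calc ENNReal.ofReal |φ (t, x)|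
      ≤ ENNReal.ofReal (|φ (0, x - lam * t)| + ∫ s in Set.Ioc 0 t, |G s|) :=
        ENNReal.ofReal_le_ofReal h1
    _ = ENNReal.ofReal |φ (0, x - lam * t)| + ENNReal.ofReal (∫ s in Set.Ioc 0 t, |G s|) := by
        rw [ENNReal.ofReal_add (abs_nonneg _) (by positivity)]
    _ ≤ _ := by
        refine add_le_add le_rfl ?_
        rw [ofReal_integral_eq_lintegral_ofReal (hGc.abs.integrableOn_Ioc)
          (Filter.Eventually.of_forall fun s => abs_nonneg _)]
        exact lintegral_mono' (Measure.restrict_mono (Set.Ioc_subset_Icc_self.trans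
          (Set.Icc_subset_Icc le_rfl htT)) le_rfl) le_rfl

lemma ptpx (φ : ℝ × ℝ → ℝ) (hφ : ContDiff ℝ 1 φ) (lam : ℝ) (p : ℝ × ℝ) :
    pt φ p + lam * px φ p = fderiv ℝ φ p (1, lam) := by
  have hD := (hφ.differentiable one_ne_zero p).hasFDerivAt
  have h1 : HasDerivAt (fun t => φ (t, p.2)) (fderiv ℝ φ p (1, 0)) p.1 := by
    have := hD.comp_hasDerivAt p.1 ((hasDerivAt_id p.1).prodMk (hasDerivAt_const p.1 p.2))
    simpa [Function.comp_def] using this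
  have h2 : HasDerivAt (fun x => φ (p.1, x)) (fderiv ℝ φ p (0, 1)) p.2 := by
    have := hD.comp_hasDerivAt p.2 ((hasDerivAt_const p.2 p.1).prodMk (hasDerivAt_id p.2))
    simpa [Function.comp_def] using this
  have hpt : pt φ p = fderiv ℝ φ p (1, 0) := h1.deriv
  have hpx : px φ p = fderiv ℝ φ p (0, 1) := h2.deriv
  rw [hpt, hpx]
  have : ((1:ℝ), lam) = ((1:ℝ), (0:ℝ)) + lam • ((0:ℝ), (1:ℝ)) := by
    simp [Prod.ext_iff]
  rw [this, map_add, ContinuousLinearMap.map_smul, smul_eq_mul]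

theorem stmt_8 (T : ℝ) (hT : 0 ≤ T) (lam : Fin 2 → ℝ) (hlam : lam 0 ≠ lam 1)
    (φ F : Fin 2 → ℝ × ℝ → ℝ) (hφ : ∀ i, ContDiff ℝ 1 (φ i))
    (heq : ∀ i, ∀ p : ℝ × ℝ, p.1 ∈ Set.Icc 0 T →
      pt (φ i) p + lam i * px (φ i) p = F i p) :
    ∫⁻ p : ℝ × ℝ in Set.Icc 0 T ×ˢ Set.univ, ENNReal.ofReal |φ 0 p * φ 1 p|
      ≤ (ENNReal.ofReal |lam 0 - lam 1|)⁻¹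
        * ((∫⁻ x : ℝ, ENNReal.ofReal |φ 0 (0, x)|)
            + ∫⁻ p : ℝ × ℝ in Set.Icc 0 T ×ˢ Set.univ, ENNReal.ofReal |F 0 p|)
        * ((∫⁻ x : ℝ, ENNReal.ofReal |φ 1 (0, x)|)
            + ∫⁻ p : ℝ × ℝ in Set.Icc 0 T ×ˢ Set.univ, ENNReal.ofReal |F 1 p|) := by
  set S : Set (ℝ × ℝ) := Set.Icc 0 T ×ˢ Set.univ with hS
  have hSm : MeasurableSet S := measurableSet_Icc.prod MeasurableSet.univ
  set G : Fin 2 → ℝ × ℝ → ℝ := fun i p => fderiv ℝ (φ i) p (1, lam i) with hGdef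
  have hGc : ∀ i, Continuous (G i) := fun i =>
    ((hφ i).continuous_fderiv one_ne_zero).clm_apply continuous_const
  have hFG : ∀ i, ∀ p ∈ S, F i p = G i p := by
    intro i p hp
    rw [← heq i p hp.1]
    exact ptpx (φ i) (hφ i) (lam i) p
  have hFint : ∀ i, (∫⁻ p in S, ENNReal.ofReal |F i p|)
      = ∫⁻ p in S, ENNReal.ofReal |G i p| := fun i =>
    setLIntegral_congr_fun hSm (fun p hp => by rw [hFG i p hp])
  set μ : Measure ℝ := Measure.dirac (-1) + volume.restrict (Set.Icc 0 T) with hμ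
  have hSF : SFinite μ := inferInstance
  set H : Fin 2 → ℝ × ℝ → ℝ≥0∞ := fun i q =>
    if q.1 < 0 then ENNReal.ofReal |φ i (0, q.2)|
    else ENNReal.ofReal |G i (q.1, q.2 + lam i * q.1)| with hHdef
  have hHm : ∀ i, Measurable (H i) := by
    intro i
    refine Measurable.ite (measurableSet_lt measurable_fst measurable_const) ?_ ?_
    · exact (ENNReal.continuous_ofReal.comp (continuous_abs.comp
        ((hφ i).continuous.comp (by fun_prop)))).measurable
    · exact (ENNReal.continuous_ofReal.comp (continuous_abs.comp
        ((hGc i).comp (by fun_prop)))).measurable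
  -- set-lintegral over the strip as iterated integral
  have prodS : ∀ f : ℝ × ℝ → ℝ≥0∞, Measurable f →
      (∫⁻ p in S, f p) = ∫⁻ s in Set.Icc 0 T, ∫⁻ y, f (s, y) := by
    intro f hf
    rw [hS, Measure.volume_eq_prod, ← Measure.restrict_prod_eq_prod_univ,
      lintegral_prod _ hf.aemeasurable]
  -- total mass identity
  have hμint : ∀ i, (∫⁻ s, ∫⁻ y, H i (s, y) ∂volume ∂μ)
      = (∫⁻ x, ENNReal.ofReal |φ i (0, x)|) + ∫⁻ p in S, ENNReal.ofReal |F i p| := by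
    intro i
    rw [hμ, lintegral_add_measure]
    congr 1
    · rw [lintegral_dirac (-1) (fun s => ∫⁻ y, H i (s, y))]
      refine lintegral_congr fun y => ?_
      simp only [hHdef]
      rw [if_pos (by norm_num)]
    · rw [hFint i, prodS _ (by
        exact ENNReal.continuous_ofReal.comp (continuous_abs.comp (hGc i)) |>.measurable)]
      refine setLIntegral_congr_fun measurableSet_Icc
        (fun s hs => ?_)
      have : ∀ y : ℝ, H i (s, y) = ENNReal.ofReal |G i (s, y + lam i * s)| := by
        intro y; simp only [hHdef]; rw [if_neg (not_lt.2 hs.1)]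
      simp only [this]
      exact lintegral_add_right_eq_self (fun y => ENNReal.ofReal |G i (s, y)|) (lam i * s)
  -- pointwise upper bound on the strip
  have hub : ∀ i, ∀ p : ℝ × ℝ, p ∈ S →
      ENNReal.ofReal |φ i p| ≤ ∫⁻ s, H i (s, p.2 - lam i * p.1) ∂μ := by
    intro i p hp
    rw [hμ, lintegral_add_measure, lintegral_dirac (-1) (fun s => H i (s, p.2 - lam i * p.1))]
    have e1 : H i (-1, p.2 - lam i * p.1) = ENNReal.ofReal |φ i (0, p.2 - lam i * p.1)| := by
      simp only [hHdef]; rw [if_pos (by norm_num)]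
    have e2 : (∫⁻ s in Set.Icc 0 T, H i (s, p.2 - lam i * p.1))
        = ∫⁻ s in Set.Icc 0 T,
            ENNReal.ofReal |fderiv ℝ (φ i) (s, p.2 - lam i * p.1 + lam i * s) (1, lam i)| := by
      refine setLIntegral_congr_fun measurableSet_Icc
        (fun s hs => ?_)
      simp only [hHdef]; rw [if_neg (not_lt.2 hs.1)]
    rw [e1, e2]
    have := pointbound T (lam i) (φ i) (hφ i) p.2 hp.1
    simpa using this
  -- the main computation
  calc ∫⁻ p in S, ENNReal.ofReal |φ 0 p * φ 1 p|
      ≤ ∫⁻ p in S, (∫⁻ s, H 0 (s, p.2 - lam 0 * p.1) ∂μ)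
          * ∫⁻ s, H 1 (s, p.2 - lam 1 * p.1) ∂μ := by
        refine lintegral_mono_ae ((ae_restrict_iff' hSm).2
          (Filter.Eventually.of_forall fun p hp => ?_))
        rw [abs_mul, ENNReal.ofReal_mul (abs_nonneg _)]
        exact mul_le_mul' (hub 0 p hp) (hub 1 p hp)
    _ = ∫⁻ p in S, ∫⁻ z : ℝ × ℝ, H 0 (z.1, p.2 - lam 0 * p.1)
          * H 1 (z.2, p.2 - lam 1 * p.1) ∂(μ.prod μ) := by
        refine lintegral_congr fun p => ?_
        exact (lintegral_prod_mul ((hHm 0).comp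
          (measurable_id.prodMk measurable_const)).aemeasurable ((hHm 1).comp
          (measurable_id.prodMk measurable_const)).aemeasurable).symm
    _ = ∫⁻ z : ℝ × ℝ, (∫⁻ p in S, H 0 (z.1, p.2 - lam 0 * p.1)
          * H 1 (z.2, p.2 - lam 1 * p.1)) ∂(μ.prod μ) := by
        refine lintegral_lintegral_swap (μ := volume.restrict S) (ν := μ.prod μ)
          (f := fun p z => H 0 (z.1, p.2 - lam 0 * p.1) * H 1 (z.2, p.2 - lam 1 * p.1)) ?_
        refine (Measurable.mul ?_ ?_).aemeasurable
        · exact (hHm 0).comp (by fun_prop)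
        · exact (hHm 1).comp (by fun_prop)
    _ ≤ ∫⁻ z : ℝ × ℝ, ((ENNReal.ofReal |lam 0 - lam 1|)⁻¹
          * ((∫⁻ y, H 0 (z.1, y)) * (∫⁻ y, H 1 (z.2, y)))) ∂(μ.prod μ) := by
        refine lintegral_mono (μ := μ.prod μ) fun z => ?_
        refine le_trans (setLIntegral_le_lintegral _ _) ?_
        exact le_of_eq (key (lam 0) (lam 1) hlam _ _
          ((hHm 0).comp (measurable_const.prodMk measurable_id))
          ((hHm 1).comp (measurable_const.prodMk measurable_id)))
    _ = (ENNReal.ofReal |lam 0 - lam 1|)⁻¹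
          * ∫⁻ z : ℝ × ℝ, ((∫⁻ y, H 0 (z.1, y)) * (∫⁻ y, H 1 (z.2, y))) ∂(μ.prod μ) := by
        refine lintegral_const_mul _ ?_
        exact (((hHm 0).lintegral_prod_right').comp measurable_fst).mul
          (((hHm 1).lintegral_prod_right').comp measurable_snd)
    _ = (ENNReal.ofReal |lam 0 - lam 1|)⁻¹
          * ((∫⁻ s, ∫⁻ y, H 0 (s, y) ∂volume ∂μ) * ∫⁻ s, ∫⁻ y, H 1 (s, y) ∂volume ∂μ) := by
        rw [lintegral_prod_mul ((hHm 0).lintegral_prod_right').aemeasurable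
          ((hHm 1).lintegral_prod_right').aemeasurable]
    _ = _ := by rw [hμint 0, hμint 1, mul_assoc]
end

section
/- Separation of characteristic cones: let λ_a ≠ λ_b be positive reals and 0 < ε₀ < |λ_a − λ_b|/(2λ_b). If r ≥ ε₀τ, r ≥ ε₀⁻¹|λ_aτ − r|, and |λ_bτ − r| ≤ s ≤ λ_bτ + r with τ, r, s > 0, then (ε₀/(λ_b + ε₀))·s ≤ r ≤ (2λ_a/|λ_a − λ_b|)·s. -/
theorem stmt_15 (lamA lamB ε₀ τ r s : ℝ)
    (hA : 0 < lamA) (hB : 0 < lamB) (hne : lamA ≠ lamB)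
    (hε : 0 < ε₀) (hε' : ε₀ < |lamA - lamB| / (2 * lamB))
    (hτ : 0 < τ) (hr : 0 < r) (hs : 0 < s)
    (h1 : ε₀ * τ ≤ r) (h2 : ε₀⁻¹ * |lamA * τ - r| ≤ r)
    (h3 : |lamB * τ - r| ≤ s) (h4 : s ≤ lamB * τ + r) :
    (ε₀ / (lamB + ε₀)) * s ≤ r ∧ r ≤ (2 * lamA / |lamA - lamB|) * s := by
  have hd : 0 < |lamA - lamB| := abs_pos.2 (sub_ne_zero.2 hne)
  have hab : |lamA * τ - r| ≤ ε₀ * r := by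
    rwa [inv_mul_le_iff₀ hε] at h2
  have hBle : |lamB * τ - r| ≤ s := h3
  have hεd : ε₀ * (2 * lamB) < |lamA - lamB| := by
    rw [lt_div_iff₀ (by positivity)] at hε'
    linarith
  constructor
  · rw [div_mul_eq_mul_div, div_le_iff₀ (by positivity)]
    nlinarith [mul_le_mul_of_nonneg_left h4 hε.le, mul_le_mul_of_nonneg_left h1 hB.le]
  · have e : lamA * (lamB * τ - r) - lamB * (lamA * τ - r) = r * (lamB - lamA) := by ring
    have key : r * |lamA - lamB| ≤ lamA * s + lamB * (ε₀ * r) := by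
      have h5 : r * |lamA - lamB| = |lamA * (lamB * τ - r) - lamB * (lamA * τ - r)| := by
        rw [e, abs_mul, abs_of_pos hr, abs_sub_comm]
      rw [h5]
      calc |lamA * (lamB * τ - r) - lamB * (lamA * τ - r)|
          ≤ |lamA * (lamB * τ - r)| + |lamB * (lamA * τ - r)| := abs_sub _ _
        _ = lamA * |lamB * τ - r| + lamB * |lamA * τ - r| := by
            rw [abs_mul, abs_mul, abs_of_pos hA, abs_of_pos hB]
        _ ≤ lamA * s + lamB * (ε₀ * r) := by
            gcongr
    rw [div_mul_eq_mul_div, le_div_iff₀ hd]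
    nlinarith [key, hεd, hr.le]
end
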